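/- arXiv:0811.1734 — 2 statements merged into one kernel-verified Lean document; each statement's English description precedes it below -/
import Mathlib

section
/- Let n be a positive integer, let Ω ⊆ ℝⁿ be open with y ∈ Ω, let A : Ω → (n×n real matrices) be continuously differentiable with A(x) symmetric for each x, and let u : Ω → ℝ be twice continuously differentiable satisfying u(x) = (1/4) ⟨∇u(x), A(x) ∇u(x)⟩ for all x in a neighborhood of y. Suppose ∇u(y) = 0 and that the Hessian matrix H of u at y is invertible. Then A(y) is invertible and H = 2 A(y)⁻¹. -/
open scoped RealInnerProductSpace

open Asymptotics in
/-- If `f` is continuous at `y` and `g` is differentiable at `y` with `g y = 0`,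
then `f * g` is differentiable at `y` with derivative `f y • g'`. -/
theorem mul_vanish_hasFDerivAt {E : Type*} [NormedAddCommGroup E] [NormedSpace ℝ E]
    {f g : E → ℝ} {g' : E →L[ℝ] ℝ} {y : E}
    (hf : ContinuousAt f y) (hg : HasFDerivAt g g' y) (h0 : g y = 0) :
    HasFDerivAt (fun x => f x * g x) (f y • g') y := by
  rw [hasFDerivAt_iff_isLittleO] at hg ⊢
  rw [h0] at hg
  simp only [sub_zero] at hg
  have h1 : (fun x => f x • (g x - g' (x - y))) =o[nhds y] fun x => x - y := by
    have hbig : f =O[nhds y] (fun _ => (1 : ℝ)) := hf.isBigO_one ℝ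
    simpa using hbig.smul_isLittleO hg
  have h2 : (fun x => (f x - f y) • g' (x - y)) =o[nhds y] fun x => x - y := by
    have hsm : (fun x => f x - f y) =o[nhds y] (fun _ => (1 : ℝ)) := by
      rw [isLittleO_one_iff]
      simpa using hf.tendsto.sub_const (f y)
    simpa using hsm.smul_isBigO (g'.isBigO_sub (nhds y) y)
  have := h1.add h2
  apply this.congr_left
  intro x
  simp only [smul_eq_mul, ContinuousLinearMap.coe_smul', Pi.smul_apply, h0, mul_zero]
  ring

/-- If `u` is `C²` and solves the eikonal equation `u = (1/4)⟨∇u, A(x) ∇u⟩` near `y`,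
with `∇u(y) = 0` and invertible Hessian `H` at `y`, then `A(y)` is invertible and
`H = 2 A(y)⁻¹`. This identifies the second-order Taylor coefficients of the squared
Riemannian distance as the inverse metric coefficients. -/
theorem hessian_eq_two_inv_metric
    (n : ℕ) (hn : 0 < n)
    (Ω : Set (EuclideanSpace ℝ (Fin n))) (hΩ : IsOpen Ω)
    (y : EuclideanSpace ℝ (Fin n)) (hy : y ∈ Ω)
    (A : EuclideanSpace ℝ (Fin n) → Matrix (Fin n) (Fin n) ℝ)
    (hAC1 : ∀ i j, ContDiffOn ℝ 1 (fun x => A x i j) Ω)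
    (hAsymm : ∀ x ∈ Ω, (A x).IsSymm)
    (u : EuclideanSpace ℝ (Fin n) → ℝ)
    (huC2 : ContDiffOn ℝ 2 u Ω)
    (heik : ∀ᶠ x in nhds y, u x = (1 / 4) *
      ⟪(gradient u x : EuclideanSpace ℝ (Fin n)),
        (WithLp.toLp 2 ((A x).mulVec (gradient u x : EuclideanSpace ℝ (Fin n))) :
          EuclideanSpace ℝ (Fin n))⟫)
    (hgrad : gradient u y = 0)
    (H : Matrix (Fin n) (Fin n) ℝ)
    (hH : ∀ i j, H i j =
      fderiv ℝ (fun z => fderiv ℝ u z (EuclideanSpace.single j 1)) y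
        (EuclideanSpace.single i 1))
    (hHinv : IsUnit H.det) :
    IsUnit (A y).det ∧ H = (2 : ℝ) • (A y)⁻¹ := by
  classical
  set e : Fin n → EuclideanSpace ℝ (Fin n) := fun k => EuclideanSpace.single k 1 with he
  set G : Fin n → EuclideanSpace ℝ (Fin n) → ℝ := fun k z => fderiv ℝ u z (e k) with hG
  -- gradient components are G
  have hgk : ∀ (x : EuclideanSpace ℝ (Fin n)) (k : Fin n), (gradient u x) k = G k x := by
    intro x k
    have h1 : ⟪gradient u x, e k⟫ = fderiv ℝ u x (e k) := by
      rw [gradient]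
      exact InnerProductSpace.toDual_symm_apply
    rw [he] at h1
    rw [EuclideanSpace.inner_single_right] at h1
    simpa using h1
  -- G vanishes at y
  have hG0 : ∀ k, G k y = 0 := by
    intro k
    rw [← hgk y k, hgrad]
    rfl
  -- the Hessian entries
  have hH' : ∀ i k, fderiv ℝ (G k) y (e i) = H i k := fun i k => (hH i k).symm
  -- Φ : the quadratic form
  set Φ : EuclideanSpace ℝ (Fin n) → ℝ := fun x => ∑ k, ∑ l, G k x * (A x k l * G l x) with hΦ
  have hinner : ∀ x : EuclideanSpace ℝ (Fin n), ⟪(gradient u x : EuclideanSpace ℝ (Fin n)),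
      (WithLp.toLp 2 ((A x).mulVec (gradient u x : EuclideanSpace ℝ (Fin n))) :
        EuclideanSpace ℝ (Fin n))⟫ = Φ x := by
    intro x
    simp only [PiLp.inner_apply, RCLike.inner_apply, conj_trivial, Matrix.mulVec,
      dotProduct, PiLp.toLp_apply, hΦ, hgk, Finset.mul_sum]
    refine Finset.sum_congr rfl fun k _ => ?_
    rw [Finset.sum_mul]
    exact Finset.sum_congr rfl fun l _ => by ring
  have heq2 : ∀ᶠ x in nhds y, u x = (1 / 4) * Φ x := heik.mono fun x hx => by
    rw [hx, hinner x]
  -- obtain an open set s where the equation holds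
  obtain ⟨s, hs_sub, hso, hys⟩ := mem_nhds_iff.mp
    (Filter.inter_mem heq2 (hΩ.mem_nhds hy) :
      ({x | u x = (1 / 4) * Φ x} ∩ Ω) ∈ nhds y)
  have hsΩ : s ⊆ Ω := fun x hx => (hs_sub hx).2
  have hseq : ∀ x ∈ s, u x = (1 / 4) * Φ x := fun x hx => (hs_sub hx).1
  -- differentiability facts
  have hu' : ContDiffOn ℝ 1 (fun z => fderiv ℝ u z) Ω :=
    huC2.fderiv_of_isOpen hΩ (by norm_num)
  have hGC1 : ∀ k, ContDiffOn ℝ 1 (G k) Ω := fun k =>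
    hu'.clm_apply contDiffOn_const
  have hGdiff : ∀ k, ∀ x ∈ Ω, DifferentiableAt ℝ (G k) x := fun k x hx =>
    (((hGC1 k).differentiableOn one_ne_zero) x hx).differentiableAt (hΩ.mem_nhds hx)
  have hAdiff : ∀ k l, ∀ x ∈ Ω, DifferentiableAt ℝ (fun z => A z k l) x := fun k l x hx =>
    (((hAC1 k l).differentiableOn one_ne_zero) x hx).differentiableAt (hΩ.mem_nhds hx)
  have hGdcont : ∀ k, ContinuousOn (fun x => fderiv ℝ (G k) x) Ω := fun k =>
    (hGC1 k).continuousOn_fderiv_of_isOpen hΩ le_rfl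
  have hudiff : ∀ x ∈ Ω, DifferentiableAt ℝ u x := fun x hx =>
    ((huC2.differentiableOn (by norm_num)) x hx).differentiableAt (hΩ.mem_nhds hx)
  have hΦdiff : ∀ x ∈ Ω, DifferentiableAt ℝ Φ x := by
    intro x hx
    apply DifferentiableAt.fun_sum
    intro k _
    apply DifferentiableAt.fun_sum
    intro l _
    exact (hGdiff k x hx).mul ((hAdiff k l x hx).mul (hGdiff l x hx))
  -- main pointwise Hessian identity
  have hmain : ∀ i j, H i j =
      (1 / 4 : ℝ) * ∑ k, ∑ l,
        (H j k * A y k l * H i l + A y k l * H j l * H i k) := by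
    intro i j
    -- the three-term product-rule expression
    set T : Fin n → Fin n → EuclideanSpace ℝ (Fin n) → ℝ := fun k l z =>
      (fderiv ℝ (G k) z (e j) * A z k l) * G l z +
      (fderiv ℝ (fun x => A x k l) z (e j) * G l z) * G k z +
      (A z k l * fderiv ℝ (G l) z (e j)) * G k z with hT
    -- on Ω the derivative of Φ in direction e j is the sum of T
    have hΨeq : ∀ z ∈ Ω, fderiv ℝ Φ z (e j) = ∑ k, ∑ l, T k l z := by
      intro z hz
      have hsum : HasFDerivAt Φ
          (∑ k, ∑ l, (G k z • (A z k l • fderiv ℝ (G l) z +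
              G l z • fderiv ℝ (fun x => A x k l) z) +
            (A z k l * G l z) • fderiv ℝ (G k) z)) z := by
        apply HasFDerivAt.fun_sum
        intro k _
        apply HasFDerivAt.fun_sum
        intro l _
        exact ((hGdiff k z hz).hasFDerivAt).mul
          (((hAdiff k l z hz).hasFDerivAt).mul ((hGdiff l z hz).hasFDerivAt))
      rw [hsum.fderiv]
      simp only [ContinuousLinearMap.sum_apply, ContinuousLinearMap.add_apply,
        ContinuousLinearMap.coe_smul', Pi.smul_apply, smul_eq_mul, hT]
      refine Finset.sum_congr rfl fun k _ => Finset.sum_congr rfl fun l _ => by ring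
    -- derivative of each T k l at y
    have hTder : ∀ k l, HasFDerivAt (T k l)
        ((fderiv ℝ (G k) y (e j) * A y k l) • fderiv ℝ (G l) y +
         (fderiv ℝ (fun x => A x k l) y (e j) * G l y) • fderiv ℝ (G k) y +
          (A y k l * fderiv ℝ (G l) y (e j)) • fderiv ℝ (G k) y) y := by
      intro k l
      have hc1 : ContinuousAt (fun z => fderiv ℝ (G k) z (e j) * A z k l) y := by
        have := ((hGdcont k).clm_apply (continuousOn_const (c := e j))).mul
          ((hAC1 k l).continuousOn)
        exact this.continuousAt (hΩ.mem_nhds hy)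
      have hc2 : ContinuousAt (fun z => fderiv ℝ (fun x => A x k l) z (e j) * G l z) y := by
        have hAd' : ContinuousOn (fun x => fderiv ℝ (fun z => A z k l) x) Ω :=
          (hAC1 k l).continuousOn_fderiv_of_isOpen hΩ le_rfl
        have := (hAd'.clm_apply (continuousOn_const (c := e j))).mul
          ((hGC1 l).continuousOn)
        exact this.continuousAt (hΩ.mem_nhds hy)
      have hc3 : ContinuousAt (fun z => A z k l * fderiv ℝ (G l) z (e j)) y := by
        have := ((hAC1 k l).continuousOn).mul
          ((hGdcont l).clm_apply (continuousOn_const (c := e j)))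
        exact this.continuousAt (hΩ.mem_nhds hy)
      simp only [hT]
      exact ((mul_vanish_hasFDerivAt hc1 ((hGdiff l y hy).hasFDerivAt) (hG0 l)).add
        (mul_vanish_hasFDerivAt hc2 ((hGdiff k y hy).hasFDerivAt) (hG0 k))).add
          (mul_vanish_hasFDerivAt hc3 ((hGdiff k y hy).hasFDerivAt) (hG0 k))
    -- derivative of the full sum at y
    have hsumder : HasFDerivAt (fun z => ∑ k, ∑ l, T k l z)
        (∑ k, ∑ l,
          ((fderiv ℝ (G k) y (e j) * A y k l) • fderiv ℝ (G l) y +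
           (fderiv ℝ (fun x => A x k l) y (e j) * G l y) • fderiv ℝ (G k) y +
            (A y k l * fderiv ℝ (G l) y (e j)) • fderiv ℝ (G k) y)) y :=
      HasFDerivAt.fun_sum fun k _ => HasFDerivAt.fun_sum fun l _ => hTder k l
    -- G j agrees with (1/4) * sum T near y
    have hGj_eq : G j =ᶠ[nhds y] fun z => (1 / 4 : ℝ) * ∑ k, ∑ l, T k l z := by
      filter_upwards [hso.mem_nhds hys] with z hz
      have hz' : z ∈ Ω := hsΩ hz
      have hfe : fderiv ℝ u z = fderiv ℝ (fun x => (1 / 4 : ℝ) * Φ x) z := by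
        apply Filter.EventuallyEq.fderiv_eq
        filter_upwards [hso.mem_nhds hz] with w hw using hseq w hw
      have : fderiv ℝ (fun x => (1 / 4 : ℝ) * Φ x) z = (1 / 4 : ℝ) • fderiv ℝ Φ z :=
        fderiv_const_mul (hΦdiff z hz') _
      simp only [hG]
      rw [hfe, this]
      simp only [ContinuousLinearMap.coe_smul', Pi.smul_apply, smul_eq_mul]
      rw [hΨeq z hz']
    -- conclude via congruence
    have hGjder : HasFDerivAt (G j)
        ((1 / 4 : ℝ) • (∑ k, ∑ l,
          ((fderiv ℝ (G k) y (e j) * A y k l) • fderiv ℝ (G l) y +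
           (fderiv ℝ (fun x => A x k l) y (e j) * G l y) • fderiv ℝ (G k) y +
            (A y k l * fderiv ℝ (G l) y (e j)) • fderiv ℝ (G k) y))) y := by
      refine HasFDerivAt.congr_of_eventuallyEq ?_ hGj_eq
      simpa [smul_smul] using hsumder.const_mul (1 / 4 : ℝ)
    have hHij : H i j = fderiv ℝ (G j) y (e i) := hH i j
    rw [hHij, hGjder.fderiv]
    simp only [ContinuousLinearMap.coe_smul', Pi.smul_apply, smul_eq_mul,
      ContinuousLinearMap.sum_apply, ContinuousLinearMap.add_apply, hG0, mul_zero, zero_mul,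
      zero_smul, zero_add, add_zero, ContinuousLinearMap.zero_apply, hH']
  -- Matrix algebra
  have hAsy : (A y).transpose = A y := hAsymm y hy
  have hMsymm : (H * A y * H.transpose).transpose = H * A y * H.transpose := by
    rw [Matrix.transpose_mul, Matrix.transpose_mul, Matrix.transpose_transpose, hAsy,
      Matrix.mul_assoc]
  have hHM : H = (2⁻¹ : ℝ) • (H * A y * H.transpose) := by
    have expand : ∀ a b, (H * A y * H.transpose) a b = ∑ m, ∑ k, H a k * A y k m * H b m := by
      intro a b
      simp only [Matrix.mul_apply, Matrix.transpose_apply, Finset.sum_mul]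
    ext i j
    have hs : (H * A y * H.transpose) j i = (H * A y * H.transpose) i j := by
      have hs' := congrFun (congrFun hMsymm i) j
      rwa [Matrix.transpose_apply] at hs'
    have h1 : ∑ k, ∑ l, H j k * A y k l * H i l = (H * A y * H.transpose) j i := by
      rw [expand j i, Finset.sum_comm]
    have h2 : ∑ k, ∑ l, A y k l * H j l * H i k = (H * A y * H.transpose) i j := by
      rw [expand i j, Finset.sum_comm]
      refine Finset.sum_congr rfl fun k _ => Finset.sum_congr rfl fun l _ => by ring
    rw [Matrix.smul_apply, smul_eq_mul, hmain i j]
    simp only [Finset.sum_add_distrib, h1, h2, hs]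
    ring
  have hB1 : H⁻¹ * H = 1 := Matrix.nonsing_inv_mul H hHinv
  have h3 : H⁻¹ * H = H⁻¹ * ((2⁻¹ : ℝ) • (H * A y * H.transpose)) :=
    congrArg (fun M => H⁻¹ * M) hHM
  rw [hB1, Matrix.mul_smul, ← Matrix.mul_assoc, ← Matrix.mul_assoc, hB1, Matrix.one_mul] at h3
  have hrinv : A y * ((2⁻¹ : ℝ) • H.transpose) = 1 := by
    rw [Matrix.mul_smul]
    exact h3.symm
  have hAdet : IsUnit (A y).det := Matrix.isUnit_det_of_right_inverse hrinv
  have hAinv : (A y)⁻¹ = (2⁻¹ : ℝ) • H.transpose := Matrix.inv_eq_right_inv hrinv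
  refine ⟨hAdet, ?_⟩
  have hT2 : H.transpose = (2 : ℝ) • (A y)⁻¹ := by
    rw [hAinv, smul_smul]
    norm_num
  calc H = H.transpose.transpose := (Matrix.transpose_transpose H).symm
    _ = ((2 : ℝ) • (A y)⁻¹).transpose := by rw [hT2]
    _ = (2 : ℝ) • ((A y)⁻¹).transpose := Matrix.transpose_smul _ _
    _ = (2 : ℝ) • ((A y).transpose)⁻¹ := by rw [Matrix.transpose_nonsing_inv]
    _ = (2 : ℝ) • (A y)⁻¹ := by rw [hAsy]
end

section
/- Let n be a positive integer, let Ω ⊆ ℝⁿ be open and let y ∈ Ω. Let λ₁, …, λₙ : Ω → ℝ be real-analytic functions with λ_i(y) > 0 for each i. Suppose u and v are real-analytic functions on an open ball B ⊆ Ω centered at y, both satisfying the eikonal equation w(x) = (1/4) ∑_{i=1}^n λ_i(x) (∂_i w(x))² for all x ∈ B, and suppose u(y) = v(y) = 0, ∇u(y) = ∇v(y) = 0, and the Hessians of u and v at y both equal the diagonal matrix with entries 2/λ_i(y). Then u = v on a neighborhood of y. -/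
open Metric Set Filter

section

variable {E : Type*} [NormedAddCommGroup E] [InnerProductSpace ℝ E] [CompleteSpace E]

local notation "⟪" x ", " y "⟫" => @inner ℝ _ _ x y

lemma backward_step (B : E → E) (w : E → ℝ) (y : E) (ε₁ : ℝ) (hε₁ : 0 < ε₁) (K : NNReal)
    (hlip : LipschitzOnWith K B (Metric.closedBall y ε₁))
    (hBy : B y = 0)
    (hinner : ∀ z ∈ Metric.closedBall y ε₁, ‖z - y‖^2 ≤ 2 * ⟪B z, z - y⟫)
    (hwd : ∀ z ∈ Metric.closedBall y ε₁, DifferentiableAt ℝ w z)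
    (hpde : ∀ z ∈ Metric.closedBall y ε₁, w z = fderiv ℝ w z (B z)) :
    ∃ τ : ℝ, 0 < τ ∧ ∀ x ∈ Metric.closedBall y (ε₁/2), ∃ x' ∈ Metric.closedBall y (ε₁/2),
      ‖x' - y‖ ≤ Real.exp (-(τ/2)) * ‖x - y‖ ∧ w x = Real.exp τ * w x' := by
  classical
  set C : ℝ := (K : ℝ) * ε₁ + 1 with hC
  have hCpos : 0 < C := by positivity
  set R : ℝ := ε₁ / 2 with hR
  have hRpos : 0 < R := by positivity
  set τ : ℝ := R / C with hτdef
  have hτ : 0 < τ := by positivity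
  refine ⟨τ, hτ, fun x hx => ?_⟩
  -- Picard–Lindelöf data
  have hsub : Metric.closedBall x R ⊆ Metric.closedBall y ε₁ := by
    intro z hz
    rw [Metric.mem_closedBall] at hz ⊢
    rw [Metric.mem_closedBall] at hx
    calc dist z y ≤ dist z x + dist x y := dist_triangle _ _ _
    _ ≤ R + ε₁ / 2 := add_le_add hz hx
    _ = ε₁ := by rw [hR]; ring
  have hx0 : x ∈ Metric.closedBall x ((0 : NNReal) : ℝ) := Metric.mem_closedBall_self le_rfl
  have hpl : IsPicardLindelof (fun _ : ℝ => B)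
      (⟨0, Set.mem_Icc.mpr ⟨neg_nonpos.mpr hτ.le, le_refl 0⟩⟩ : Icc (-τ) (0:ℝ)) x (⟨R, hRpos.le⟩ : NNReal) 0 (⟨C, hCpos.le⟩ : NNReal) K :=
    IsPicardLindelof.of_time_independent
      (by
        intro z hz
        show ‖B z‖ ≤ C
        have hz' := hsub hz
        have := hlip.dist_le_mul z hz' y (Metric.mem_closedBall_self hε₁.le)
        rw [hBy, dist_zero_right] at this
        calc ‖B z‖ ≤ (K : ℝ) * dist z y := this
        _ ≤ (K : ℝ) * ε₁ := by
            exact mul_le_mul_of_nonneg_left (Metric.mem_closedBall.mp hz') K.coe_nonneg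
        _ ≤ C := by rw [hC]; linarith)
      (hlip.mono hsub)
      (by
        have : max ((0:ℝ) - 0) (0 - -τ) = τ := by
          rw [sub_self, sub_neg_eq_add, zero_add]; exact max_eq_right hτ.le
        show C * max ((0:ℝ) - 0) (0 - -τ) ≤ _
        rw [this, hτdef]
        simp only [NNReal.coe_mk, NNReal.coe_zero, sub_zero]
        field_simp
        rfl)
  obtain ⟨F, hF⟩ := ODE.FunSpace.exists_isFixedPt_next hpl hx0
  set γ : ℝ → E := fun t => F.compProj t with hγdef
  have hγ0 : γ 0 = x := by
    rw [hγdef]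
    simp only
    have h1 := ODE.FunSpace.next_apply₀ hpl hx0 F
    exact (ODE.FunSpace.compProj_of_mem (Set.mem_Icc.mpr ⟨neg_nonpos.mpr hτ.le, le_refl 0⟩)).trans
      ((congrArg (fun G : ODE.FunSpace _ _ _ _ => G.toFun _) hF.eq).symm.trans h1)
  have hmem : ∀ t : ℝ, γ t ∈ Metric.closedBall x R := fun t =>
    F.compProj_mem_closedBall hpl.mul_max_le
  have hmem' : ∀ t : ℝ, γ t ∈ Metric.closedBall y ε₁ := fun t => hsub (hmem t)
  have hderiv : ∀ t ∈ Icc (-τ) (0:ℝ), HasDerivWithinAt γ (B (γ t)) (Icc (-τ) 0) t := by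
    intro t ht
    have h := ODE.hasDerivWithinAt_picard_Icc (f := fun _ : ℝ => B)
      (⟨neg_nonpos.mpr hτ.le, le_refl 0⟩ : (0:ℝ) ∈ Icc (-τ) (0:ℝ)) hpl.continuousOn_uncurry
      F.continuous_compProj.continuousOn (fun _ _ => F.compProj_mem_closedBall hpl.mul_max_le) x ht
    refine h.congr_of_mem (fun s hs => ?_) ht
    show F.compProj s = _
    exact (ODE.FunSpace.compProj_of_mem hs).trans
      ((congrArg (fun G : ODE.FunSpace _ _ _ _ => G.toFun ⟨s, hs⟩) hF.eq).symm.trans (ODE.FunSpace.next_apply hpl hx0 F))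
  have hγc : ContinuousOn γ (Icc (-τ) 0) := fun t ht => (hderiv t ht).continuousWithinAt
  have hγd : ∀ t ∈ Ioo (-τ) (0:ℝ), HasDerivAt γ (B (γ t)) t := fun t ht =>
    (hderiv t (Ioo_subset_Icc_self ht)).hasDerivAt (Icc_mem_nhds ht.1 ht.2)
  have hexp : ∀ t : ℝ, HasDerivAt (fun s => Real.exp (-s)) (Real.exp (-t) * (-1)) t :=
    fun t => (Real.hasDerivAt_exp (-t)).comp t (hasDerivAt_neg t)
  -- the quantity ⟪γ t - y, γ t - y⟫ * exp (-t) is monotone on [-τ, 0]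
  set φ : ℝ → ℝ := fun t => ⟪γ t - y, γ t - y⟫ * Real.exp (-t) with hφdef
  have hφd : ∀ t ∈ Ioo (-τ) (0:ℝ), HasDerivAt φ
      ((⟪γ t - y, B (γ t)⟫ + ⟪B (γ t), γ t - y⟫) * Real.exp (-t)
        + ⟪γ t - y, γ t - y⟫ * (Real.exp (-t) * (-1))) t := by
    intro t ht
    have hd1 : HasDerivAt (fun s => γ s - y) (B (γ t)) t := (hγd t ht).sub_const y
    exact (HasDerivAt.inner ℝ hd1 hd1).mul (hexp t)
  have hφmono : MonotoneOn φ (Icc (-τ) 0) := by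
    apply monotoneOn_of_deriv_nonneg (convex_Icc _ _)
    · exact ((hγc.sub continuousOn_const).inner (hγc.sub continuousOn_const)).mul
        (Real.continuous_exp.comp continuous_neg).continuousOn
    · intro t ht
      rw [interior_Icc] at ht
      exact (hφd t ht).differentiableAt.differentiableWithinAt
    · intro t ht
      rw [interior_Icc] at ht
      rw [(hφd t ht).deriv]
      have h1 : ‖γ t - y‖^2 ≤ 2 * ⟪B (γ t), γ t - y⟫ := hinner _ (hmem' t)
      have h2 : ⟪γ t - y, γ t - y⟫ = ‖γ t - y‖^2 := real_inner_self_eq_norm_sq _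
      have h3 : ⟪γ t - y, B (γ t)⟫ = ⟪B (γ t), γ t - y⟫ := real_inner_comm _ _
      have h4 : (0:ℝ) < Real.exp (-t) := Real.exp_pos _
      nlinarith [h4.le]
  -- the quantity w (γ t) * exp (-t) is constant on [-τ, 0]
  set ψ : ℝ → ℝ := fun t => w (γ t) * Real.exp (-t) with hψdef
  have hψd : ∀ t ∈ Ioo (-τ) (0:ℝ), HasDerivAt ψ
      (w (γ t) * Real.exp (-t) + w (γ t) * (Real.exp (-t) * (-1))) t := by
    intro t ht
    have hw1 : HasDerivAt (fun s => w (γ s)) (fderiv ℝ w (γ t) (B (γ t))) t :=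
      ((hwd _ (hmem' t)).hasFDerivAt).comp_hasDerivAt t (hγd t ht)
    rw [← hpde _ (hmem' t)] at hw1
    exact hw1.mul (hexp t)
  have hψc : ContinuousOn ψ (Icc (-τ) 0) := by
    apply ContinuousOn.mul _ (Real.continuous_exp.comp continuous_neg).continuousOn
    intro t ht
    exact ((hwd _ (hmem' t)).continuousAt).comp_continuousWithinAt (hγc t ht)
  have hψconst : ψ (-τ) = ψ 0 := by
    have hmem0 : (0:ℝ) ∈ Icc (-τ) (0:ℝ) := ⟨neg_nonpos.mpr hτ.le, le_refl 0⟩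
    have hmemτ : (-τ) ∈ Icc (-τ) (0:ℝ) := ⟨le_refl _, neg_nonpos.mpr hτ.le⟩
    have hd : ∀ t ∈ interior (Icc (-τ) (0:ℝ)), deriv ψ t = 0 := by
      intro t ht
      rw [interior_Icc] at ht
      rw [(hψd t ht).deriv]; ring
    have hmono : MonotoneOn ψ (Icc (-τ) 0) := by
      apply monotoneOn_of_deriv_nonneg (convex_Icc _ _) hψc
      · intro t ht
        rw [interior_Icc] at ht
        exact (hψd t ht).differentiableAt.differentiableWithinAt
      · intro t ht; rw [hd t ht]
    have hanti : AntitoneOn ψ (Icc (-τ) 0) := by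
      apply antitoneOn_of_deriv_nonpos (convex_Icc _ _) hψc
      · intro t ht
        rw [interior_Icc] at ht
        exact (hψd t ht).differentiableAt.differentiableWithinAt
      · intro t ht; rw [hd t ht]
    exact le_antisymm (hmono hmemτ hmem0 (neg_nonpos.mpr hτ.le))
      (hanti hmemτ hmem0 (neg_nonpos.mpr hτ.le))
  have hcontr : ‖γ (-τ) - y‖ ≤ Real.exp (-(τ/2)) * ‖x - y‖ := by
    have hmemτ : (-τ) ∈ Icc (-τ) (0:ℝ) := ⟨le_refl _, neg_nonpos.mpr hτ.le⟩
    have hmem0 : (0:ℝ) ∈ Icc (-τ) (0:ℝ) := ⟨neg_nonpos.mpr hτ.le, le_refl 0⟩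
    have h := hφmono hmemτ hmem0 (neg_nonpos.mpr hτ.le)
    rw [hφdef] at h
    simp only [hγ0, neg_neg, neg_zero, Real.exp_zero, mul_one] at h
    have h2 : ‖γ (-τ) - y‖^2 * Real.exp τ ≤ ‖x - y‖^2 := by
      rw [← real_inner_self_eq_norm_sq, ← real_inner_self_eq_norm_sq]
      exact h
    have hexpτ : Real.exp (-(τ/2)) * Real.exp (-(τ/2)) = Real.exp (-τ) := by
      rw [← Real.exp_add]; ring_nf
    have h3 : ‖γ (-τ) - y‖^2 ≤ (Real.exp (-(τ/2)) * ‖x - y‖)^2 := by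
      have e1 : (Real.exp (-(τ/2)) * ‖x - y‖)^2 = Real.exp (-τ) * ‖x - y‖^2 := by
        rw [mul_pow, pow_two, hexpτ]
      rw [e1]
      have h4 : Real.exp (-τ) * (‖γ (-τ) - y‖^2 * Real.exp τ) ≤ Real.exp (-τ) * ‖x - y‖^2 :=
        mul_le_mul_of_nonneg_left h2 (Real.exp_pos _).le
      calc ‖γ (-τ) - y‖^2 = Real.exp (-τ) * (‖γ (-τ) - y‖^2 * Real.exp τ) := by
            rw [mul_comm (Real.exp (-τ)) _, mul_assoc, ← Real.exp_add, add_neg_cancel,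
              Real.exp_zero, mul_one]
      _ ≤ Real.exp (-τ) * ‖x - y‖^2 := h4
    nlinarith [norm_nonneg (γ (-τ) - y), mul_nonneg (Real.exp_pos (-(τ/2))).le (norm_nonneg (x - y)),
      sq_nonneg (‖γ (-τ) - y‖ - Real.exp (-(τ/2)) * ‖x - y‖),
      sq_nonneg (‖γ (-τ) - y‖ + Real.exp (-(τ/2)) * ‖x - y‖)]
  refine ⟨γ (-τ), ?_, hcontr, ?_⟩
  · -- membership
    rw [Metric.mem_closedBall, dist_eq_norm]
    calc ‖γ (-τ) - y‖ ≤ Real.exp (-(τ/2)) * ‖x - y‖ := hcontr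
    _ ≤ 1 * (ε₁ / 2) := by
        apply mul_le_mul
        · exact Real.exp_le_one_iff.mpr (by linarith)
        · rw [← dist_eq_norm]; exact hx
        · exact norm_nonneg _
        · exact zero_le_one
    _ = ε₁ / 2 := one_mul _
  · -- value relation
    have h := hψconst
    rw [hψdef] at h
    simp only [hγ0, neg_neg, neg_zero, Real.exp_zero, mul_one] at h
    rw [← h]; ring

end

lemma cubic_bound {E : Type*} [NormedAddCommGroup E] [NormedSpace ℝ E]
    (w : E → ℝ) (y : E) (hw : AnalyticAt ℝ w y) (h0 : w y = 0)
    (h1 : fderiv ℝ w y = 0) (h2 : ∀ ξ : E, fderiv ℝ (fderiv ℝ w) y ξ ξ = 0) :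
    ∃ K ε : ℝ, 0 ≤ K ∧ 0 < ε ∧ ∀ x ∈ Metric.closedBall y ε, |w x| ≤ K * ‖x - y‖ ^ 3 := by
  obtain ⟨p, hp⟩ := hw
  obtain ⟨rr, hpb⟩ := hp
  have hp : HasFPowerSeriesAt w p y := ⟨rr, hpb⟩
  have hdiag : ∀ z : E, p.partialSum 3 z = 0 := by
    intro z
    have e0 : p 0 (fun _ => z) = 0 := by
      have := hpb.factorial_smul z 0
      rw [iteratedFDeriv_zero_apply, h0] at this
      simpa using this
    have e1 : p 1 (fun _ => z) = 0 := by
      have := hpb.factorial_smul z 1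
      rw [iteratedFDeriv_one_apply, h1] at this
      simpa using this
    have e2 : p 2 (fun _ => z) = 0 := by
      have h := hpb.factorial_smul z 2
      rw [iteratedFDeriv_two_apply] at h
      simp only [Matrix.cons_val_zero, Matrix.cons_val_one, Matrix.head_cons, h2 z] at h
      rw [nsmul_eq_mul] at h
      simpa [Nat.factorial] using h
    show ∑ k ∈ Finset.range 3, p k (fun _ => z) = 0
    rw [Finset.sum_range_succ, Finset.sum_range_succ, Finset.sum_range_one, e0, e1, e2]
    ring
  have hO := hp.isBigO_sub_partialSum_pow 3
  simp only [hdiag, sub_zero] at hO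
  obtain ⟨c, hc⟩ := hO.bound
  rw [Metric.eventually_nhds_iff] at hc
  obtain ⟨δ, hδ, hcb⟩ := hc
  refine ⟨max c 0, δ/2, le_max_right _ _, by positivity, fun x hx => ?_⟩
  have hxy : dist (x - y) 0 < δ := by
    simp only [dist_zero_right]
    calc ‖x - y‖ = dist x y := by rw [dist_eq_norm]
    _ ≤ δ/2 := hx
    _ < δ := by linarith
  have hb := hcb hxy
  simp only [add_sub_cancel] at hb
  calc |w x| = ‖w x‖ := rfl
  _ ≤ c * ‖‖x - y‖ ^ 3‖ := hb
  _ ≤ max c 0 * ‖x - y‖ ^ 3 := by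
      rw [norm_pow, norm_norm]
      exact mul_le_mul_of_nonneg_right (le_max_left _ _) (by positivity)

lemma euclid_sum_single {n : ℕ} (ξ : EuclideanSpace ℝ (Fin n)) :
    ∑ i, ξ i • EuclideanSpace.single i (1:ℝ) = ξ := by
  ext j
  simp [EuclideanSpace.single_apply, Pi.single_apply]

set_option maxHeartbeats 1000000

/-- Local uniqueness for real-analytic solutions of the diagonalized eikonal equation
`w = (1/4) ∑ᵢ λᵢ (∂ᵢ w)²`: two analytic solutions on a ball centered at `y` with value `0`,
gradient `0` and Hessian `diag (2/λᵢ(y))` at `y` coincide near `y`. -/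
theorem analytic_eikonal_local_uniqueness
    (n : ℕ) (hn : 0 < n)
    (Ω : Set (EuclideanSpace ℝ (Fin n))) (hΩ : IsOpen Ω)
    (y : EuclideanSpace ℝ (Fin n)) (hy : y ∈ Ω)
    (lam : Fin n → EuclideanSpace ℝ (Fin n) → ℝ)
    (hlamAn : ∀ i, AnalyticOnNhd ℝ (lam i) Ω)
    (hlamPos : ∀ i, 0 < lam i y)
    (r : ℝ) (hr : 0 < r) (hB : Metric.ball y r ⊆ Ω)
    (u v : EuclideanSpace ℝ (Fin n) → ℝ)
    (huAn : AnalyticOnNhd ℝ u (Metric.ball y r))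
    (hvAn : AnalyticOnNhd ℝ v (Metric.ball y r))
    (hueik : ∀ x ∈ Metric.ball y r, u x = (1 / 4) *
      ∑ i, lam i x * (fderiv ℝ u x (EuclideanSpace.single i 1)) ^ 2)
    (hveik : ∀ x ∈ Metric.ball y r, v x = (1 / 4) *
      ∑ i, lam i x * (fderiv ℝ v x (EuclideanSpace.single i 1)) ^ 2)
    (hu0 : u y = 0) (hv0 : v y = 0)
    (hugrad : gradient u y = 0) (hvgrad : gradient v y = 0)
    (huHess : ∀ i j,
      fderiv ℝ (fun z => fderiv ℝ u z (EuclideanSpace.single j 1)) y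
          (EuclideanSpace.single i 1)
        = if i = j then 2 / lam i y else 0)
    (hvHess : ∀ i j,
      fderiv ℝ (fun z => fderiv ℝ v z (EuclideanSpace.single j 1)) y
          (EuclideanSpace.single i 1)
        = if i = j then 2 / lam i y else 0) :
    ∃ s ∈ nhds y, Set.EqOn u v s := by
  classical
  set e : Fin n → EuclideanSpace ℝ (Fin n) := fun i => EuclideanSpace.single i (1:ℝ) with he
  have hyball : y ∈ Metric.ball y r := Metric.mem_ball_self hr
  have hballopen : IsOpen (Metric.ball y r) := Metric.isOpen_ball
  -- basic functions
  set w : EuclideanSpace ℝ (Fin n) → ℝ := fun z => u z - v z with hwdef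
  set g : Fin n → EuclideanSpace ℝ (Fin n) → ℝ := fun i z => fderiv ℝ u z (e i) with hgdef
  set g' : Fin n → EuclideanSpace ℝ (Fin n) → ℝ := fun i z => fderiv ℝ v z (e i) with hg'def
  set b : Fin n → EuclideanSpace ℝ (Fin n) → ℝ := fun i z => 1 / 4 * lam i z * (g i z + g' i z) with hbdef
  set Bf : EuclideanSpace ℝ (Fin n) → EuclideanSpace ℝ (Fin n) := fun z => ∑ i, b i z • e i with hBfdef
  -- first derivatives vanish at y
  have hfu0 : fderiv ℝ u y = 0 := by
    have := congrArg (InnerProductSpace.toDual ℝ (EuclideanSpace ℝ (Fin n))) hugrad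
    simpa [gradient] using this
  have hfv0 : fderiv ℝ v y = 0 := by
    have := congrArg (InnerProductSpace.toDual ℝ (EuclideanSpace ℝ (Fin n))) hvgrad
    simpa [gradient] using this
  -- analyticity and smoothness
  have hwAn : AnalyticOnNhd ℝ w (Metric.ball y r) := fun z hz => (huAn z hz).sub (hvAn z hz)
  have hfduAn : AnalyticOnNhd ℝ (fderiv ℝ u) (Metric.ball y r) := huAn.fderiv
  have hfdvAn : AnalyticOnNhd ℝ (fderiv ℝ v) (Metric.ball y r) := hvAn.fderiv
  have hgC : ∀ i, ∀ z ∈ Metric.ball y r, ContDiffAt ℝ 1 (g i) z := fun i z hz =>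
    ((hfduAn z hz).contDiffAt).clm_apply contDiffAt_const
  have hg'C : ∀ i, ∀ z ∈ Metric.ball y r, ContDiffAt ℝ 1 (g' i) z := fun i z hz =>
    ((hfdvAn z hz).contDiffAt).clm_apply contDiffAt_const
  have hbC : ∀ i, ContDiffAt ℝ 1 (b i) y := by
    intro i
    exact (contDiffAt_const.mul ((hlamAn i y hy).contDiffAt)).mul
      ((hgC i y hyball).add (hg'C i y hyball))
  have hBfC : ContDiffAt ℝ 1 Bf y := by
    apply ContDiffAt.sum
    intro i _
    exact (hbC i).smul contDiffAt_const
  -- value of Bf at y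
  have hg0 : ∀ i, g i y = 0 := fun i => by rw [hgdef]; simp [hfu0]
  have hg'0 : ∀ i, g' i y = 0 := fun i => by rw [hg'def]; simp [hfv0]
  have hb0 : ∀ i, b i y = 0 := fun i => by rw [hbdef]; simp [hg0 i, hg'0 i]
  have hBf0 : Bf y = 0 := by
    rw [hBfdef]; simp only
    rw [Finset.sum_eq_zero]
    intro i _
    rw [hb0 i, zero_smul]
  -- derivative of Bf at y is the identity
  have hlamne : ∀ i, lam i y ≠ 0 := fun i => (hlamPos i).ne'
  have hBfD : HasFDerivAt Bf (ContinuousLinearMap.id ℝ (EuclideanSpace ℝ (Fin n))) y := by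
    have hgd : ∀ i, DifferentiableAt ℝ (g i) y := fun i => (hgC i y hyball).differentiableAt one_ne_zero
    have hg'd : ∀ i, DifferentiableAt ℝ (g' i) y := fun i =>
      (hg'C i y hyball).differentiableAt one_ne_zero
    set Gu : Fin n → _ := fun i => fderiv ℝ (g i) y with hGudef
    set Gv : Fin n → _ := fun i => fderiv ℝ (g' i) y with hGvdef
    have hGuval : ∀ i j, Gu i (e j) = if j = i then 2 / lam j y else 0 := fun i j => huHess j i
    have hGvval : ∀ i j, Gv i (e j) = if j = i then 2 / lam j y else 0 := fun i j => hvHess j i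
    have hbD : ∀ i, HasFDerivAt (b i) ((1/4 * lam i y) • (Gu i + Gv i)) y := by
      intro i
      have h1 : HasFDerivAt (fun z => 1/4 * lam i z) ((1/4 : ℝ) • fderiv ℝ (lam i) y) y :=
        ((hlamAn i y hy).differentiableAt.hasFDerivAt).const_mul (1/4)
      have h2 : HasFDerivAt (fun z => g i z + g' i z) (Gu i + Gv i) y :=
        ((hgd i).hasFDerivAt).add ((hg'd i).hasFDerivAt)
      have h3 := h1.mul h2
      have h4 : g i y + g' i y = 0 := by rw [hg0 i, hg'0 i, add_zero]
      rw [h4, zero_smul, add_zero] at h3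
      exact h3
    have hsum : HasFDerivAt Bf (∑ i, ((1/4 * lam i y) • (Gu i + Gv i)).smulRight (e i)) y := by
      apply HasFDerivAt.fun_sum
      intro i _
      exact (hbD i).smul_const (e i)
    have hid : (∑ i, ((1/4 * lam i y) • (Gu i + Gv i)).smulRight (e i))
        = ContinuousLinearMap.id ℝ (EuclideanSpace ℝ (Fin n)) := by
      apply ContinuousLinearMap.ext
      intro ξ
      rw [ContinuousLinearMap.sum_apply, ContinuousLinearMap.id_apply]
      have hGuv : ∀ i, (Gu i + Gv i) ξ = 4 / lam i y * ξ i := by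
        intro i
        have hξ : ξ = ∑ j, ξ j • e j := (euclid_sum_single ξ).symm
        rw [ContinuousLinearMap.add_apply]
        conv_lhs => rw [hξ]
        rw [map_sum, map_sum]
        simp_rw [map_smul, hGuval i, hGvval i, smul_eq_mul, mul_ite, mul_zero]
        simp only [Finset.sum_ite_eq', Finset.mem_univ, if_true]
        field_simp [hlamne i]
        ring
      calc ∑ i, (((1/4 * lam i y) • (Gu i + Gv i)).smulRight (e i)) ξ
          = ∑ i, (ξ i) • e i := by
            apply Finset.sum_congr rfl
            intro i _
            rw [ContinuousLinearMap.smulRight_apply, ContinuousLinearMap.smul_apply, hGuv i]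
            congr 1
            rw [smul_eq_mul]
            rw [show (1:ℝ) / 4 * lam i y * (4 / lam i y * ξ i)
              = lam i y / lam i y * ξ i by ring]
            rw [div_self (hlamne i), one_mul]
      _ = ξ := euclid_sum_single ξ
    rw [← hid]
    exact hsum
  -- PDE for w in terms of Bf
  have hwd : ∀ z ∈ Metric.ball y r, DifferentiableAt ℝ w z := fun z hz =>
    ((huAn z hz).differentiableAt).sub ((hvAn z hz).differentiableAt)
  have hfdw : ∀ z ∈ Metric.ball y r, fderiv ℝ w z = fderiv ℝ u z - fderiv ℝ v z := fun z hz =>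
    fderiv_sub ((huAn z hz).differentiableAt) ((hvAn z hz).differentiableAt)
  have hpde : ∀ z ∈ Metric.ball y r, w z = fderiv ℝ w z (Bf z) := by
    intro z hz
    have hBfz : fderiv ℝ w z (Bf z) = ∑ i, b i z * (g i z - g' i z) := by
      rw [hBfdef]
      simp only
      rw [map_sum]
      apply Finset.sum_congr rfl
      intro i _
      rw [map_smul, smul_eq_mul]
      congr 1
      rw [hfdw z hz, ContinuousLinearMap.sub_apply]
    rw [hBfz]
    have hsum : ∑ i, b i z * (g i z - g' i z)
        = 1/4 * ∑ i, lam i z * (g i z)^2 - 1/4 * ∑ i, lam i z * (g' i z)^2 := by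
      calc ∑ i, b i z * (g i z - g' i z)
          = ∑ i, (1/4 * (lam i z * (g i z)^2) - 1/4 * (lam i z * (g' i z)^2)) := by
            apply Finset.sum_congr rfl
            intro i _
            rw [hbdef]
            simp only
            ring
      _ = 1/4 * ∑ i, lam i z * (g i z)^2 - 1/4 * ∑ i, lam i z * (g' i z)^2 := by
            rw [Finset.sum_sub_distrib, ← Finset.mul_sum, ← Finset.mul_sum]
    rw [hsum, hwdef]
    simp only
    rw [hueik z hz, hveik z hz]
  -- 2-jet of w vanishes at y
  have h1w : fderiv ℝ w y = 0 := by rw [hfdw y hyball, hfu0, hfv0, sub_zero]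
  have h2w : ∀ ξ : EuclideanSpace ℝ (Fin n), fderiv ℝ (fderiv ℝ w) y ξ ξ = 0 := by
    have hfdwd : DifferentiableAt ℝ (fderiv ℝ w) y := ((hwAn.fderiv) y hyball).differentiableAt
    have hT : ∀ i j, fderiv ℝ (fderiv ℝ w) y (e i) (e j) = 0 := by
      intro i j
      have hc := fderiv_clm_apply (𝕜 := ℝ) (c := fderiv ℝ w) (u := fun _ => e j) hfdwd
        (differentiableAt_const _)
      rw [fderiv_fun_const] at hc
      simp only [Pi.zero_apply, ContinuousLinearMap.comp_zero, zero_add] at hc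
      have hev : (fun z => fderiv ℝ w z (e j)) =ᶠ[nhds y] (fun z => g j z - g' j z) := by
        filter_upwards [hballopen.mem_nhds hyball] with z hz
        rw [hfdw z hz, ContinuousLinearMap.sub_apply]
      have hW2 : fderiv ℝ (fun z => fderiv ℝ w z (e j)) y
          = fderiv ℝ (g j) y - fderiv ℝ (g' j) y := by
        rw [hev.fderiv_eq]
        exact fderiv_sub ((hgC j y hyball).differentiableAt one_ne_zero)
          ((hg'C j y hyball).differentiableAt one_ne_zero)
      have happ : fderiv ℝ (fun z => fderiv ℝ w z (e j)) y (e i)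
          = fderiv ℝ (fderiv ℝ w) y (e i) (e j) := by
        rw [hc]
        rfl
      rw [← happ, hW2, ContinuousLinearMap.sub_apply]
      have h1 := huHess i j
      have h2 := hvHess i j
      rw [hgdef, hg'def]
      simp only
      rw [h1, h2, sub_self]
    intro ξ
    have hξ : ξ = ∑ j, ξ j • e j := (euclid_sum_single ξ).symm
    conv_lhs => rw [hξ]
    rw [map_sum]
    apply Finset.sum_eq_zero
    intro i _
    rw [map_smul]
    rw [map_sum, ContinuousLinearMap.sum_apply]
    have hz : ∑ j, (fderiv ℝ (fderiv ℝ w) y (ξ j • e j)) (e i) = 0 := by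
      apply Finset.sum_eq_zero
      intro j _
      rw [map_smul, ContinuousLinearMap.smul_apply, hT j i, smul_zero]
    rw [hz, smul_zero]
  have hw0 : w y = 0 := by rw [hwdef]; simp [hu0, hv0]
  -- cubic bound
  obtain ⟨K₃, ε₂, hK₃, hε₂, hcub⟩ := cubic_bound w y (hwAn y hyball) hw0 h1w h2w
  -- Lipschitz neighbourhood
  obtain ⟨K, t, ht, hKlip⟩ := hBfC.exists_lipschitzOnWith
  obtain ⟨δ₂, hδ₂, hδ₂sub⟩ := Metric.mem_nhds_iff.mp ht
  -- little-o neighbourhood for the inner-product estimate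
  have hlo := (hasFDerivAt_iff_isLittleO_nhds_zero.mp hBfD).def (by norm_num : (0:ℝ) < 1/2)
  rw [Metric.eventually_nhds_iff] at hlo
  obtain ⟨δ₃, hδ₃, hlob⟩ := hlo
  -- choose the working radius
  set ε₁ : ℝ := min (min (r/2) (δ₂/2)) (δ₃/2) with hε₁def
  have hε₁ : 0 < ε₁ := by
    apply lt_min (lt_min _ _) <;> positivity
  have hε₁r : Metric.closedBall y ε₁ ⊆ Metric.ball y r := by
    apply Metric.closedBall_subset_ball
    calc ε₁ ≤ r/2 := le_trans (min_le_left _ _) (min_le_left _ _)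
    _ < r := by linarith
  have hε₁lip : Metric.closedBall y ε₁ ⊆ t := by
    refine subset_trans (Metric.closedBall_subset_ball ?_) hδ₂sub
    calc ε₁ ≤ δ₂/2 := le_trans (min_le_left _ _) (min_le_right _ _)
    _ < δ₂ := by linarith
  -- the three hypotheses of the backward step
  have hinner : ∀ z ∈ Metric.closedBall y ε₁, ‖z - y‖^2 ≤ 2 * (inner ℝ (Bf z) (z - y) : ℝ) := by
    intro z hz
    have hdist : dist (z - y) (0 : EuclideanSpace ℝ (Fin n)) < δ₃ := by
      rw [dist_zero_right, ← dist_eq_norm]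
      calc dist z y ≤ ε₁ := hz
      _ ≤ δ₃/2 := min_le_right _ _
      _ < δ₃ := by linarith
    have h1 := hlob hdist
    rw [add_sub_cancel, hBf0, sub_zero, ContinuousLinearMap.id_apply] at h1
    have h2 : (inner ℝ (Bf z) (z - y) : ℝ)
        = inner ℝ (Bf z - (z - y)) (z - y) + inner ℝ (z - y) (z - y) := by
      rw [inner_sub_left]; ring
    have h3 : |(inner ℝ (Bf z - (z - y)) (z - y) : ℝ)| ≤ ‖Bf z - (z - y)‖ * ‖z - y‖ :=
      abs_real_inner_le_norm _ _
    have h4 : (inner ℝ (z - y) (z - y) : ℝ) = ‖z - y‖^2 := real_inner_self_eq_norm_sq _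
    have h5 : ‖Bf z - (z - y)‖ * ‖z - y‖ ≤ 1/2 * ‖z - y‖ * ‖z - y‖ :=
      mul_le_mul_of_nonneg_right h1 (norm_nonneg _)
    have h6 := abs_le.mp h3
    nlinarith [norm_nonneg (z - y)]
  obtain ⟨τ, hτ, hstep⟩ := backward_step Bf w y ε₁ hε₁ K (hKlip.mono hε₁lip) hBf0 hinner
    (fun z hz => hwd z (hε₁r hz)) (fun z hz => hpde z (hε₁r hz))
  -- iterate the backward step
  set c : ℝ := Real.exp (-(τ/2)) with hcdef
  have hc0 : 0 < c := Real.exp_pos _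
  have hc1 : c < 1 := Real.exp_lt_one_iff.mpr (by linarith)
  set ρ : ℝ := min (ε₁/2) ε₂ with hρdef
  have hρ : 0 < ρ := lt_min (by positivity) hε₂
  have hρε₁ : ρ ≤ ε₁/2 := min_le_left _ _
  have hρε₂ : ρ ≤ ε₂ := min_le_right _ _
  have hiter : ∀ k : ℕ, ∀ x ∈ Metric.closedBall y ρ, |w x| ≤ K₃ * c^k * ‖x - y‖^3 := by
    intro k
    induction k with
    | zero =>
      intro x hx
      simpa using hcub x (Metric.closedBall_subset_closedBall hρε₂ hx)
    | succ k ih =>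
      intro x hx
      obtain ⟨x', hx'mem, hcontr, hval⟩ := hstep x (Metric.closedBall_subset_closedBall hρε₁ hx)
      have hx'ρ : x' ∈ Metric.closedBall y ρ := by
        rw [Metric.mem_closedBall, dist_eq_norm]
        calc ‖x' - y‖ ≤ c * ‖x - y‖ := hcontr
        _ ≤ 1 * ρ := by
            apply mul_le_mul hc1.le _ (norm_nonneg _) zero_le_one
            rw [← dist_eq_norm]
            exact hx
        _ = ρ := one_mul _
      have h1 := ih x' hx'ρ
      have h2 : ‖x' - y‖^3 ≤ (c * ‖x - y‖)^3 := pow_le_pow_left₀ (norm_nonneg _) hcontr 3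
      have hexp3 : Real.exp τ * c^3 = c := by
        rw [hcdef, ← Real.exp_nat_mul, ← Real.exp_add]
        congr 1
        push_cast
        ring
      calc |w x| = Real.exp τ * |w x'| := by rw [hval, abs_mul, abs_of_pos (Real.exp_pos τ)]
      _ ≤ Real.exp τ * (K₃ * c^k * ‖x' - y‖^3) := mul_le_mul_of_nonneg_left h1 (Real.exp_pos τ).le
      _ ≤ Real.exp τ * (K₃ * c^k * (c * ‖x - y‖)^3) := by
            apply mul_le_mul_of_nonneg_left _ (Real.exp_pos τ).le
            exact mul_le_mul_of_nonneg_left h2 (mul_nonneg hK₃ (pow_nonneg hc0.le k))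
      _ = K₃ * c^(k+1) * ‖x - y‖^3 := by
            rw [mul_pow]
            calc Real.exp τ * (K₃ * c^k * (c^3 * ‖x - y‖^3))
                = K₃ * c^k * (Real.exp τ * c^3) * ‖x - y‖^3 := by ring
            _ = K₃ * c^(k+1) * ‖x - y‖^3 := by rw [hexp3]; ring
  have hzero : ∀ x ∈ Metric.closedBall y ρ, w x = 0 := by
    intro x hx
    have hto : Filter.Tendsto (fun k : ℕ => K₃ * c^k * ‖x - y‖^3) Filter.atTop (nhds 0) := by
      have h1 := (tendsto_pow_atTop_nhds_zero_of_lt_one hc0.le hc1).const_mul K₃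
      have h2 := h1.mul_const (‖x - y‖^3)
      simpa using h2
    have hle : |w x| ≤ 0 := ge_of_tendsto hto (Filter.Eventually.of_forall fun k => hiter k x hx)
    exact abs_eq_zero.mp (le_antisymm hle (abs_nonneg _))
  refine ⟨Metric.ball y ρ, Metric.ball_mem_nhds y hρ, fun x hx => ?_⟩
  have := hzero x (Metric.ball_subset_closedBall hx)
  rw [hwdef] at this
  exact sub_eq_zero.mp this
end
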